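/- Let Φ be a Young function satisfying the ∇₂-condition with b(Φ) = ∞ or Φ(b(Φ)) = ∞, and let φ : (0,∞) → (0,∞). Then there exists C > 0 such that for every measurable f and every ball B = B(a,r) with ‖f‖_{Φ,φ,B,weak} < ∞: (1/|B|) ∫_B |f(x)| dx ≤ C Φ⁻¹(φ(r)) ‖f‖_{Φ,φ,B,weak}, where ‖f‖_{Φ,φ,B,weak} = inf{λ>0 : sup_{t>0} Φ(t)|{x ∈ B : |f(x)|/λ > t}| ≤ |B|φ(r)}. -/

import Mathlib

open MeasureTheory ENNReal NNReal Metric Set Filter Topology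

noncomputable def geninv (Φ : ℝ≥0∞ → ℝ≥0∞) (u : ℝ≥0∞) : ℝ≥0∞ :=
  sInf {t : ℝ≥0∞ | u < Φ t}

/-- Generalized Young function (class Φ_Y of the paper): increasing, vanishing at 0,
infinite at ∞, convex, left continuous, nondegenerate. -/
def IsYoung (Φ : ℝ≥0∞ → ℝ≥0∞) : Prop :=
  Monotone Φ ∧ Φ 0 = 0 ∧ Φ ⊤ = ⊤ ∧
    (∀ x y a b : ℝ≥0∞, a + b = 1 → Φ (a * x + b * y) ≤ a * Φ x + b * Φ y) ∧
    (∀ t : ℝ≥0∞, 0 < t → ContinuousWithinAt Φ (Set.Iio t) t) ∧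
    (∃ t : ℝ≥0∞, 0 < t ∧ Φ t < ⊤) ∧ (∃ t : ℝ≥0∞, t ≠ ⊤ ∧ 0 < Φ t)

/-- The ∇₂-condition. -/
def Nabla2 (Φ : ℝ≥0∞ → ℝ≥0∞) : Prop :=
  ∃ k : ℝ≥0, 1 < k ∧ ∀ t : ℝ≥0∞, 0 < t → Φ t ≤ Φ ((k : ℝ≥0∞) * t) / (2 * (k : ℝ≥0∞))

/-- Orlicz–Morrey functional on a single ball `B(a,r)`. -/
noncomputable def ballNorm (Φ : ℝ≥0∞ → ℝ≥0∞) (φ : ℝ → ℝ≥0∞) {d : ℕ}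
    (a : EuclideanSpace ℝ (Fin d)) (r : ℝ) (f : EuclideanSpace ℝ (Fin d) → ℝ≥0∞) : ℝ≥0∞ :=
  sInf {l : ℝ≥0∞ | 0 < l ∧
    (∫⁻ x in ball a r, Φ (f x / l)) ≤ φ r * volume (ball a r)}

/-- Weak Orlicz–Morrey functional on a single ball `B(a,r)`. -/
noncomputable def wBallNorm (Φ : ℝ≥0∞ → ℝ≥0∞) (φ : ℝ → ℝ≥0∞) {d : ℕ}
    (a : EuclideanSpace ℝ (Fin d)) (r : ℝ) (f : EuclideanSpace ℝ (Fin d) → ℝ≥0∞) : ℝ≥0∞ :=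
  sInf {l : ℝ≥0∞ | 0 < l ∧ ∀ t : ℝ≥0∞, 0 < t → t ≠ ⊤ →
    Φ t * volume {x ∈ ball a r | t < f x / l} ≤ φ r * volume (ball a r)}

/-- Orlicz–Morrey norm. -/
noncomputable def omNorm (Φ : ℝ≥0∞ → ℝ≥0∞) (φ : ℝ → ℝ≥0∞) {d : ℕ}
    (f : EuclideanSpace ℝ (Fin d) → ℝ≥0∞) : ℝ≥0∞ :=
  ⨆ (a : EuclideanSpace ℝ (Fin d)) (r : ℝ) (_ : 0 < r), ballNorm Φ φ a r f

/-- Weak Orlicz–Morrey norm. -/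
noncomputable def womNorm (Φ : ℝ≥0∞ → ℝ≥0∞) (φ : ℝ → ℝ≥0∞) {d : ℕ}
    (f : EuclideanSpace ℝ (Fin d) → ℝ≥0∞) : ℝ≥0∞ :=
  ⨆ (a : EuclideanSpace ℝ (Fin d)) (r : ℝ) (_ : 0 < r), wBallNorm Φ φ a r f

/-- For `Φ ∈ ∇₂` (with `b(Φ) = ∞` or `Φ(b(Φ)) = ∞`), averages are controlled by the
weak Orlicz–Morrey ball functional. -/
theorem stmt10 {d : ℕ} (Φ : ℝ≥0∞ → ℝ≥0∞) (hΦ : IsYoung Φ) (hN : Nabla2 Φ)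
    (hb : sInf {t : ℝ≥0∞ | Φ t = ⊤} = ⊤ ∨ Φ (sInf {t : ℝ≥0∞ | Φ t = ⊤}) = ⊤)
    (φ : ℝ → ℝ≥0∞) (hφ : ∀ r : ℝ, 0 < r → 0 < φ r ∧ φ r < ⊤) :
    ∃ C : ℝ≥0∞, 0 < C ∧ C ≠ ⊤ ∧
      ∀ f : EuclideanSpace ℝ (Fin d) → ℝ≥0∞, ∀ (a : EuclideanSpace ℝ (Fin d)) (r : ℝ),
        0 < r → wBallNorm Φ φ a r f < ⊤ →
          (volume (ball a r))⁻¹ * (∫⁻ x in ball a r, f x) ≤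
            C * geninv Φ (φ r) * wBallNorm Φ φ a r f := by
  classical
  obtain ⟨hmono, hΦ0, hΦtop, hconv, _hlc, ⟨s0, hs0pos, hs0fin⟩, ⟨u0, hu0top, hu0pos⟩⟩ := hΦ
  obtain ⟨k, hk1, hkN⟩ := hN
  have hk0 : (k : ℝ≥0∞) ≠ 0 := by
    simpa using (zero_lt_one.trans hk1).ne'
  have hktop : (k : ℝ≥0∞) ≠ ⊤ := ENNReal.coe_ne_top
  have hk1' : 1 < (k : ℝ≥0∞) := by exact_mod_cast hk1
  have h2k0 : (2 * (k : ℝ≥0∞)) ≠ 0 := mul_ne_zero two_ne_zero hk0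
  have h2ktop : (2 * (k : ℝ≥0∞)) ≠ ⊤ := ENNReal.mul_ne_top ENNReal.ofNat_ne_top hktop
  -- iterated ∇₂
  have hiter : ∀ t : ℝ≥0∞, 0 < t → ∀ n : ℕ,
      (2 * (k : ℝ≥0∞)) ^ n * Φ t ≤ Φ ((k : ℝ≥0∞) ^ n * t) := by
    intro t ht n
    induction n with
    | zero => simp
    | succ n ih =>
      have ht' : 0 < (k : ℝ≥0∞) ^ n * t := ENNReal.mul_pos (pow_ne_zero n hk0) ht.ne'
      have h1 := hkN _ ht'
      rw [ENNReal.le_div_iff_mul_le (Or.inl h2k0) (Or.inl h2ktop)] at h1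
      calc (2 * (k : ℝ≥0∞)) ^ (n + 1) * Φ t
          = (2 * (k : ℝ≥0∞)) * ((2 * (k : ℝ≥0∞)) ^ n * Φ t) := by ring
        _ ≤ (2 * (k : ℝ≥0∞)) * Φ ((k : ℝ≥0∞) ^ n * t) := mul_le_mul_right ih _
        _ = Φ ((k : ℝ≥0∞) ^ n * t) * (2 * (k : ℝ≥0∞)) := mul_comm _ _
        _ ≤ Φ ((k : ℝ≥0∞) * ((k : ℝ≥0∞) ^ n * t)) := h1
        _ = Φ ((k : ℝ≥0∞) ^ (n + 1) * t) := by rw [← mul_assoc, ← pow_succ']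
  refine ⟨((1 + 2 * k) * k : ℝ≥0), by positivity, ENNReal.coe_ne_top, ?_⟩
  intro f a r hr hw
  obtain ⟨hφr0, hφrtop⟩ := hφ r hr
  set B := ball a r with hBdef
  have hB0 : volume B ≠ 0 := (Metric.measure_ball_pos volume a hr).ne'
  have hBtop : volume B ≠ ⊤ := measure_ball_lt_top.ne
  set t0 := geninv Φ (φ r) with ht0def
  have ht0 : t0 = sInf {t : ℝ≥0∞ | φ r < Φ t} := rfl
  have hu0pos' : 0 < u0 := by
    rcases eq_or_ne u0 0 with h | h
    · rw [h, hΦ0] at hu0pos; exact absurd hu0pos (lt_irrefl _)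
    · exact zero_lt_iff.mpr h
  -- an element of the defining set, not ⊤
  have hex : ∃ e : ℝ≥0∞, e ≠ ⊤ ∧ φ r < Φ e := by
    rcases eq_or_ne (Φ u0) ⊤ with h | h
    · exact ⟨u0, hu0top, h ▸ hφrtop⟩
    · obtain ⟨n, hn⟩ := pow_unbounded_of_one_lt (R := ℝ≥0) ((φ r / Φ u0).toNNReal)
        (lt_of_lt_of_le hk1 (le_mul_of_one_le_left zero_le one_le_two))
      refine ⟨(k : ℝ≥0∞) ^ n * u0, ENNReal.mul_ne_top (pow_ne_top hktop) hu0top, ?_⟩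
      have hu0ne : Φ u0 ≠ 0 := hu0pos.ne'
      have hdivtop : φ r / Φ u0 ≠ ⊤ := (ENNReal.div_lt_top hφrtop.ne hu0ne).ne
      have h1 : φ r / Φ u0 < (((2 * k : ℝ≥0)) : ℝ≥0∞) ^ n := by
        rw [← ENNReal.coe_toNNReal hdivtop]
        exact_mod_cast hn
      rw [ENNReal.div_lt_iff (Or.inl hu0ne) (Or.inl h)] at h1
      have h2 : φ r < (2 * (k : ℝ≥0∞)) ^ n * Φ u0 := by
        have hco : (((2 * k : ℝ≥0)) : ℝ≥0∞) = 2 * (k : ℝ≥0∞) := by push_cast; ring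
        rwa [hco] at h1
      exact h2.trans_le (hiter u0 hu0pos' n)
  obtain ⟨e, hetop, hee⟩ := hex
  have ht0le : t0 ≤ e := ht0 ▸ sInf_le hee
  have ht0top : t0 ≠ ⊤ := fun h => hetop (top_le_iff.mp (h ▸ ht0le))
  -- positivity of t0
  have hexs : ∃ s' : ℝ≥0∞, 0 < s' ∧ Φ s' ≤ φ r := by
    rcases eq_or_ne (Φ s0) 0 with h0 | h0
    · exact ⟨s0, hs0pos, h0 ▸ zero_le⟩
    · set a1 : ℝ≥0∞ := min 1 (φ r / 2 / Φ s0) with ha1def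
      have ha11 : a1 ≤ 1 := min_le_left _ _
      have ha10 : 0 < a1 := lt_min zero_lt_one
        (ENNReal.div_pos (by simp [ENNReal.div_eq_zero_iff, hφr0.ne', hφrtop.ne]) hs0fin.ne)
      have hc := hconv s0 0 a1 (1 - a1) (add_tsub_cancel_of_le ha11)
      have hle : Φ (a1 * s0) ≤ a1 * Φ s0 := by simpa [hΦ0] using hc
      refine ⟨a1 * s0, ENNReal.mul_pos ha10.ne' hs0pos.ne', hle.trans ?_⟩
      calc a1 * Φ s0 ≤ (φ r / 2 / Φ s0) * Φ s0 := mul_le_mul_left (min_le_right _ _) _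
        _ = φ r / 2 := ENNReal.div_mul_cancel h0 hs0fin.ne
        _ ≤ φ r := ENNReal.half_le_self
  obtain ⟨s', hs'0, hs'le⟩ := hexs
  have ht0pos : 0 < t0 := by
    refine lt_of_lt_of_le hs'0 (ht0 ▸ le_sInf fun u hu => ?_)
    by_contra hlt
    push_neg at hlt
    exact absurd (lt_of_lt_of_le hu ((hmono hlt.le).trans hs'le)) (lt_irrefl _)
  -- threshold t1
  set t1 := (k : ℝ≥0∞) * t0 with ht1def
  have ht1pos : 0 < t1 := ENNReal.mul_pos hk0 ht0pos.ne'
  have ht1top : t1 ≠ ⊤ := ENNReal.mul_ne_top hktop ht0top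
  have ht0t1 : t0 < t1 := by
    calc t0 = 1 * t0 := (one_mul _).symm
      _ < (k : ℝ≥0∞) * t0 := by
          rw [ENNReal.mul_lt_mul_iff_left ht0pos.ne' ht0top]; exact hk1'
  have hΦt1 : φ r ≤ Φ t1 := by
    obtain ⟨u, hu, hult⟩ := sInf_lt_iff.mp (ht0 ▸ ht0t1)
    exact (le_of_lt hu).trans (hmono hult.le)
  -- lower bound for Φ at k^n * t1
  have hΦlow : ∀ n : ℕ, (2 * (k : ℝ≥0∞)) ^ n * φ r ≤ Φ ((k : ℝ≥0∞) ^ n * t1) :=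
    fun n => (mul_le_mul_right hΦt1 _).trans (hiter t1 ht1pos n)
  -- the key estimate for each admissible l
  have key : ∀ l : ℝ≥0∞, (0 < l ∧ ∀ t : ℝ≥0∞, 0 < t → t ≠ ⊤ →
      Φ t * volume {x ∈ B | t < f x / l} ≤ φ r * volume B) →
      (volume B)⁻¹ * (∫⁻ x in B, f x) ≤ (((1 + 2 * k) * k : ℝ≥0) : ℝ≥0∞) * t0 * l := by
    intro l ⟨hl0, hlcond⟩
    rcases eq_or_ne l ⊤ with rfl | hltop
    · rw [ENNReal.mul_top]
      · exact le_top
      · exact mul_ne_zero (by positivity) ht0pos.ne'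
    set g : EuclideanSpace ℝ (Fin d) → ℝ≥0∞ := fun x => f x / l with hgdef
    set A : ℕ → Set (EuclideanSpace ℝ (Fin d)) :=
      fun n => {y | (k : ℝ≥0∞) ^ n * t1 < g y} with hAdef
    set Sn : ℕ → Set (EuclideanSpace ℝ (Fin d)) :=
      fun n => toMeasurable volume (A n ∩ B) with hSndef
    have hSnm : ∀ n, MeasurableSet (Sn n) := fun n => measurableSet_toMeasurable _ _
    have hsub : ∀ n, A n ∩ B ⊆ Sn n := fun n => subset_toMeasurable _ _
    set c : ℕ → ℝ≥0∞ := fun n => (k : ℝ≥0∞) ^ (n + 1) * t1 with hcdef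
    -- volume bound
    have hvol : ∀ n : ℕ, volume (A n ∩ B) ≤ volume B / (2 * (k : ℝ≥0∞)) ^ n := by
      intro n
      have htn0 : 0 < (k : ℝ≥0∞) ^ n * t1 := ENNReal.mul_pos (pow_ne_zero n hk0) ht1pos.ne'
      have htnt : (k : ℝ≥0∞) ^ n * t1 ≠ ⊤ := ENNReal.mul_ne_top (pow_ne_top hktop) ht1top
      have hc1 := hlcond _ htn0 htnt
      have hset : {x ∈ B | (k : ℝ≥0∞) ^ n * t1 < f x / l} = A n ∩ B := by
        ext x; simp [hAdef, hgdef, Set.mem_sep_iff, and_comm]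
      rw [hset] at hc1
      have h2 : ((2 * (k : ℝ≥0∞)) ^ n * φ r) * volume (A n ∩ B) ≤ φ r * volume B :=
        le_trans (mul_le_mul_left (hΦlow n) _) hc1
      have h3 : φ r * ((2 * (k : ℝ≥0∞)) ^ n * volume (A n ∩ B)) ≤ φ r * volume B := by
        calc φ r * ((2 * (k : ℝ≥0∞)) ^ n * volume (A n ∩ B))
            = ((2 * (k : ℝ≥0∞)) ^ n * φ r) * volume (A n ∩ B) := by ring
          _ ≤ φ r * volume B := h2
      have h4 := (ENNReal.mul_le_mul_iff_right hφr0.ne' hφrtop.ne).mp h3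
      rw [ENNReal.le_div_iff_mul_le (Or.inl (pow_ne_zero n h2k0)) (Or.inl (pow_ne_top h2ktop))]
      rw [mul_comm]
      exact h4
    -- pointwise bound
    have hpt : ∀ x ∈ B, g x ≤ t1 + ∑' n : ℕ, (Sn n).indicator (fun _ => c n) x := by
      intro x hx
      by_cases hgx : g x ≤ t1
      · exact le_add_right hgx
      push_neg at hgx
      rcases eq_or_ne (g x) ⊤ with hgt | hgfin
      · rw [hgt]
        have hxall : ∀ n, x ∈ Sn n := by
          intro n
          refine hsub n ⟨?_, hx⟩
          show (k : ℝ≥0∞) ^ n * t1 < g x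
          rw [hgt]
          exact (ENNReal.mul_ne_top (pow_ne_top hktop) ht1top).lt_top
        have hkt1 : (k : ℝ≥0∞) * t1 ≠ 0 := mul_ne_zero hk0 ht1pos.ne'
        calc (⊤ : ℝ≥0∞) = ∑' _ : ℕ, (k : ℝ≥0∞) * t1 := (tsum_const_eq_top_of_ne_zero hkt1).symm
          _ ≤ ∑' n : ℕ, (Sn n).indicator (fun _ => c n) x := by
              refine ENNReal.tsum_le_tsum fun n => ?_
              rw [Set.indicator_of_mem (hxall n)]
              show (k : ℝ≥0∞) * t1 ≤ (k : ℝ≥0∞) ^ (n + 1) * t1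
              calc (k : ℝ≥0∞) * t1 = (k : ℝ≥0∞) ^ 1 * t1 := by rw [pow_one]
                _ ≤ (k : ℝ≥0∞) ^ (n + 1) * t1 :=
                    mul_le_mul_left (pow_le_pow_right₀ hk1'.le (by omega)) _
          _ ≤ t1 + ∑' n : ℕ, (Sn n).indicator (fun _ => c n) x := le_add_self
      · -- finite case
        have hPex : ∃ m : ℕ, g x ≤ (k : ℝ≥0∞) ^ m * t1 := by
          obtain ⟨m, hm⟩ := pow_unbounded_of_one_lt (R := ℝ≥0) ((g x / t1).toNNReal) hk1
          refine ⟨m, ?_⟩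
          have hdivtop : g x / t1 ≠ ⊤ := (ENNReal.div_lt_top hgfin ht1pos.ne').ne
          have : g x / t1 < ((k : ℝ≥0∞)) ^ m := by
            rw [← ENNReal.coe_toNNReal hdivtop]
            exact_mod_cast hm
          rw [ENNReal.div_lt_iff (Or.inl ht1pos.ne') (Or.inl ht1top)] at this
          exact this.le
        set n1 := Nat.find hPex with hn1def
        have hn1 : g x ≤ (k : ℝ≥0∞) ^ n1 * t1 := Nat.find_spec hPex
        have hn10 : n1 ≠ 0 := by
          intro h
          rw [h, pow_zero, one_mul] at hn1
          exact absurd hn1 (not_le.mpr hgx)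
        obtain ⟨n, hn⟩ : ∃ n, n1 = n + 1 :=
          ⟨n1 - 1, (Nat.succ_pred_eq_of_pos (Nat.pos_of_ne_zero hn10)).symm⟩
        have hnlt : (k : ℝ≥0∞) ^ n * t1 < g x := by
          have := Nat.find_min hPex (show n < n1 by omega)
          push_neg at this
          exact this
        have hxS : x ∈ Sn n := hsub n ⟨hnlt, hx⟩
        have hgc : g x ≤ c n := by
          show g x ≤ (k : ℝ≥0∞) ^ (n + 1) * t1
          exact hn ▸ hn1
        calc g x ≤ (Sn n).indicator (fun _ => c n) x := by
              rw [Set.indicator_of_mem hxS]; exact hgc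
          _ ≤ ∑' m : ℕ, (Sn m).indicator (fun _ => c m) x := ENNReal.le_tsum n
          _ ≤ t1 + ∑' m : ℕ, (Sn m).indicator (fun _ => c m) x := le_add_self
    -- integral estimate
    have hmeasRHS : Measurable (fun x => t1 + ∑' n : ℕ, (Sn n).indicator (fun _ => c n) x) :=
      measurable_const.add (Measurable.ennreal_tsum fun n => measurable_const.indicator (hSnm n))
    have hgeom : ∑' n : ℕ, ((k : ℝ≥0∞) * t1 * volume B) * (2 : ℝ≥0∞)⁻¹ ^ n
        = 2 * ((k : ℝ≥0∞) * t1 * volume B) := by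
      rw [ENNReal.tsum_mul_left, ENNReal.tsum_geometric]
      rw [ENNReal.one_sub_inv_two, inv_inv, mul_comm]
    have hterm : ∀ n : ℕ, c n * (volume B / (2 * (k : ℝ≥0∞)) ^ n)
        = ((k : ℝ≥0∞) * t1 * volume B) * (2 : ℝ≥0∞)⁻¹ ^ n := by
      intro n
      have hsplit : ((2 * (k : ℝ≥0∞)) ^ n)⁻¹ = (2 : ℝ≥0∞)⁻¹ ^ n * ((k : ℝ≥0∞) ^ n)⁻¹ := by
        rw [mul_pow, ENNReal.mul_inv (Or.inl (pow_ne_zero n two_ne_zero))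
          (Or.inl (pow_ne_top ENNReal.ofNat_ne_top)), ENNReal.inv_pow]
      have hkk : (k : ℝ≥0∞) ^ (n + 1) * ((k : ℝ≥0∞) ^ n)⁻¹ = (k : ℝ≥0∞) := by
        rw [pow_succ, mul_comm ((k : ℝ≥0∞) ^ n), mul_assoc,
          ENNReal.mul_inv_cancel (pow_ne_zero n hk0) (pow_ne_top hktop), mul_one]
      rw [div_eq_mul_inv, hsplit, hcdef]
      calc (k : ℝ≥0∞) ^ (n + 1) * t1 * (volume B * ((2 : ℝ≥0∞)⁻¹ ^ n * ((k : ℝ≥0∞) ^ n)⁻¹))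
          = ((k : ℝ≥0∞) ^ (n + 1) * ((k : ℝ≥0∞) ^ n)⁻¹) * t1 * volume B * (2 : ℝ≥0∞)⁻¹ ^ n := by
            ring
        _ = ((k : ℝ≥0∞) * t1 * volume B) * (2 : ℝ≥0∞)⁻¹ ^ n := by rw [hkk]
    have hint : ∫⁻ x in B, g x ≤ (1 + 2 * (k : ℝ≥0∞)) * t1 * volume B := by
      calc ∫⁻ x in B, g x
          ≤ ∫⁻ x in B, (t1 + ∑' n : ℕ, (Sn n).indicator (fun _ => c n) x) :=
            setLIntegral_mono hmeasRHS hpt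
        _ = t1 * volume B + ∑' n : ℕ, ∫⁻ x in B, (Sn n).indicator (fun _ => c n) x := by
            rw [lintegral_add_left measurable_const, setLIntegral_const,
              lintegral_tsum fun n => (measurable_const.indicator (hSnm n)).aemeasurable]
        _ ≤ t1 * volume B + ∑' n : ℕ, c n * (volume B / (2 * (k : ℝ≥0∞)) ^ n) := by
            refine add_le_add_right (ENNReal.tsum_le_tsum fun n => ?_) _
            rw [lintegral_indicator (hSnm n), setLIntegral_const, Measure.restrict_apply (hSnm n)]
            calc c n * volume (Sn n ∩ B) ≤ c n * volume (Sn n) :=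
                  mul_le_mul_right (measure_mono Set.inter_subset_left) _
              _ = c n * volume (A n ∩ B) := by rw [measure_toMeasurable]
              _ ≤ c n * (volume B / (2 * (k : ℝ≥0∞)) ^ n) := mul_le_mul_right (hvol n) _
        _ = t1 * volume B + 2 * ((k : ℝ≥0∞) * t1 * volume B) := by
            rw [tsum_congr hterm, hgeom]
        _ = (1 + 2 * (k : ℝ≥0∞)) * t1 * volume B := by ring
    have hfg : ∫⁻ x in B, f x = l * ∫⁻ x in B, g x := by
      rw [← lintegral_const_mul' l _ hltop]
      exact lintegral_congr fun x => (ENNReal.mul_div_cancel hl0.ne' hltop).symm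
    have hfinal : (volume B)⁻¹ * (∫⁻ x in B, f x)
        ≤ (volume B)⁻¹ * (l * ((1 + 2 * (k : ℝ≥0∞)) * t1 * volume B)) :=
      mul_le_mul_right (hfg ▸ mul_le_mul_right hint l) _
    refine hfinal.trans (le_of_eq ?_)
    have hcancel : (volume B)⁻¹ * volume B = 1 := ENNReal.inv_mul_cancel hB0 hBtop
    calc (volume B)⁻¹ * (l * ((1 + 2 * (k : ℝ≥0∞)) * t1 * volume B))
        = ((1 + 2 * (k : ℝ≥0∞)) * t1 * l) * ((volume B)⁻¹ * volume B) := by ring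
      _ = (1 + 2 * (k : ℝ≥0∞)) * t1 * l := by rw [hcancel, mul_one]
      _ = (((1 + 2 * k) * k : ℝ≥0) : ℝ≥0∞) * t0 * l := by
          rw [ht1def]; push_cast; ring
  -- conclude via sInf
  set cst : ℝ≥0∞ := (((1 + 2 * k) * k : ℝ≥0) : ℝ≥0∞) * t0 with hcst
  have hcst0 : cst ≠ 0 := mul_ne_zero (by positivity) ht0pos.ne'
  have hcsttop : cst ≠ ⊤ := ENNReal.mul_ne_top ENNReal.coe_ne_top ht0top
  have hgoal : (volume B)⁻¹ * (∫⁻ x in B, f x) / cst ≤ wBallNorm Φ φ a r f := by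
    refine le_sInf fun l hl => ?_
    rw [ENNReal.div_le_iff_le_mul (Or.inl hcst0) (Or.inl hcsttop)]
    exact (key l hl).trans (le_of_eq (mul_comm _ _))
  rw [ENNReal.div_le_iff_le_mul (Or.inl hcst0) (Or.inl hcsttop)] at hgoal
  calc (volume B)⁻¹ * (∫⁻ x in B, f x) ≤ wBallNorm Φ φ a r f * cst := hgoal
    _ = (((1 + 2 * k) * k : ℝ≥0) : ℝ≥0∞) * geninv Φ (φ r) * wBallNorm Φ φ a r f := by
        rw [hcst, ht0def]; ring
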